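/- arXiv:1802.03076 — 3 statements merged into one kernel-verified Lean document; each statement's English description precedes it below -/
import Mathlib

section
/- Let G be a group and k a commutative ring. For each n ≥ 0 there is a k-module isomorphism between the strictly autopoietic cochains AP(k[G]^{⊗n}) and Hom_k(k[N_n^{cy}(G, e)], k), given by f ↦ Φ(f) with Φ(f)(g_0 ⊗ ⋯ ⊗ g_n) = ⟨g_0, f(g_1 ⊗ ⋯ ⊗ g_n)⟩, with inverse Ψ sending α to the cochain Ψ(α)(g_1 ⊗ ⋯ ⊗ g_n) = α((g_1⋯g_n)^{-1} ⊗ g_1 ⊗ ⋯ ⊗ g_n) · (g_1 g_2 ⋯ g_n). -/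
open MonoidAlgebra

variable {k G : Type} [CommRing k] [Group G]

/-- Hochschild cochains on the group ring, modeled by values on basis tuples;
this is `Hom_k(k[G]^{⊗n}, k[G])`. -/
abbrev GCochain (k G : Type) [CommRing k] [Group G] (n : ℕ) : Type :=
  (Fin n → G) → MonoidAlgebra k G

/-- Merge the `i`-th and `(i+1)`-st entries of a tuple. -/
def gmerge {n : ℕ} (g : Fin (n + 1) → G) (i : Fin n) : Fin n → G := fun j =>
  if (j : ℕ) < i then g j.castSucc
  else if (j : ℕ) = i then g j.castSucc * g j.succ
  else g j.succ

/-- The Hochschild coboundary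
`(δf)(g_1,…,g_{n+1}) = g_1 f(g_2,…,g_{n+1}) + Σ_{i=1}^{n} (-1)^i f(g_1,…,g_i g_{i+1},…,g_{n+1})
  + (-1)^{n+1} f(g_1,…,g_n) g_{n+1}`. -/
noncomputable def gdelta (k G : Type) [CommRing k] [Group G] (n : ℕ) :
    GCochain k G n →ₗ[k] GCochain k G (n + 1) :=
  (LinearMap.pi fun g =>
      (LinearMap.mulLeft k (single (g 0) (1 : k))).comp (LinearMap.proj (Fin.tail g)))
  + (∑ i : Fin n, ((-1 : k) ^ ((i : ℕ) + 1)) •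
      LinearMap.pi fun g => LinearMap.proj (gmerge g i))
  + ((-1 : k) ^ (n + 1)) •
      LinearMap.pi fun g =>
        (LinearMap.mulRight k (single (g (Fin.last n)) (1 : k))).comp
          (LinearMap.proj (Fin.init g))

/-- Cochains on the cyclic bar construction: `Hom_k(k[G]^{⊗(n+1)}, k)`. -/
abbrev CyCochain (k G : Type) [CommRing k] [Group G] (n : ℕ) : Type :=
  (Fin (n + 1) → G) → k

/-- The `i`-th face of the cyclic bar construction; the last face is
`(g_0,…,g_{n+1}) ↦ (g_{n+1} g_0, g_1, …, g_n)`. -/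
def cycFace {n : ℕ} (i : ℕ) (g : Fin (n + 2) → G) : Fin (n + 1) → G :=
  if i = n + 1 then
    fun j => if (j : ℕ) = 0 then g (Fin.last (n + 1)) * g 0 else g j.castSucc
  else
    fun j => if (j : ℕ) < i then g j.castSucc
      else if (j : ℕ) = i then g j.castSucc * g j.succ
      else g j.succ

/-- `b^*`, the `Hom_k(-,k)`-dual of the cyclic Hochschild boundary `b`. -/
noncomputable def bstar (k G : Type) [CommRing k] [Group G] (n : ℕ) :
    CyCochain k G n →ₗ[k] CyCochain k G (n + 1) :=
  ∑ i ∈ Finset.range (n + 2), ((-1 : k) ^ i) •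
    LinearMap.pi fun g => LinearMap.proj (cycFace i g)

/-- `Φ_n(f)(g_0 ⊗ ⋯ ⊗ g_n) = ⟨g_0, f(g_1 ⊗ ⋯ ⊗ g_n)⟩`, where `⟨g,h⟩ = 1` iff `h = g⁻¹`
(i.e. the coefficient of `(g_0)⁻¹` in `f(g_1 ⊗ ⋯ ⊗ g_n)`). -/
def PhiMap {n : ℕ} (f : GCochain k G n) : CyCochain k G n :=
  fun g => (f (Fin.tail g)).coeff ((g 0)⁻¹)

/-- The ordered product of a tuple of group elements. -/
def gprod {n : ℕ} (g : Fin n → G) : G := (List.ofFn g).prod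

/-- The submodule of (strictly) autopoietic cochains: those with
`f(g_1 ⊗ ⋯ ⊗ g_n) = λ_{g_1,…,g_n} · (g_1 g_2 ⋯ g_n)`. -/
noncomputable def APsub (k G : Type) [CommRing k] [Group G] (n : ℕ) : Submodule k (GCochain k G n) where
  carrier := {f | ∀ g : Fin n → G, ∃ c : k, f g = c • single (gprod g) (1 : k)}
  add_mem' := by
    intro f f' hf hf' g
    obtain ⟨c, hc⟩ := hf g
    obtain ⟨c', hc'⟩ := hf' g
    exact ⟨c + c', by simp [hc, hc', add_smul]⟩
  zero_mem' := fun g => ⟨0, by simp⟩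
  smul_mem' := by
    intro c f hf g
    obtain ⟨c', hc'⟩ := hf g
    exact ⟨c * c', by simp [hc', mul_smul]⟩

/-- `N_n^{cy}(G,e)`: tuples `(g_0,…,g_n)` with `g_0 g_1 ⋯ g_n = e`. -/
def NcyE (G : Type) [Group G] (n : ℕ) : Type :=
  {g : Fin (n + 1) → G // (List.ofFn g).prod = 1}

lemma iota_prod {n : ℕ} (g : Fin n → G) :
    (List.ofFn (Fin.cons (gprod g)⁻¹ g : Fin (n + 1) → G)).prod = 1 := by
  rw [List.ofFn_succ]
  simp [gprod]

/-- `Φ(f)(g_0 ⊗ ⋯ ⊗ g_n) = ⟨g_0, f(g_1 ⊗ ⋯ ⊗ g_n)⟩`, restricted to `k[N_n^{cy}(G,e)]`. -/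
def PhiAP {n : ℕ} (f : APsub k G n) : NcyE G n → k :=
  fun g => (f.1 (Fin.tail g.1)).coeff ((g.1 0)⁻¹)

/-- `Ψ(α)(g_1 ⊗ ⋯ ⊗ g_n) = α((g_1⋯g_n)⁻¹ ⊗ g_1 ⊗ ⋯ ⊗ g_n) · (g_1 g_2 ⋯ g_n)`. -/
noncomputable def PsiAP {n : ℕ} (α : NcyE G n → k) : APsub k G n :=
  ⟨fun g => α ⟨Fin.cons (gprod g)⁻¹ g, iota_prod g⟩ • single (gprod g) (1 : k),
   fun g => ⟨α ⟨Fin.cons (gprod g)⁻¹ g, iota_prod g⟩, rfl⟩⟩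

lemma gprod_cons {n : ℕ} (a : G) (g : Fin n → G) :
    gprod (Fin.cons a g : Fin (n+1) → G) = a * gprod g := by
  simp [gprod, List.ofFn_succ]

/-- For each `n ≥ 0`, `Φ` is a `k`-module isomorphism from the strictly
autopoietic cochains `AP(k[G]^{⊗n})` onto `Hom_k(k[N_n^{cy}(G,e)], k)`, with inverse `Ψ`. -/
theorem stmt_3 :
    (∀ n : ℕ, Function.LeftInverse (PsiAP (k := k) (G := G) (n := n)) PhiAP) ∧
    (∀ n : ℕ, Function.RightInverse (PsiAP (k := k) (G := G) (n := n)) PhiAP) ∧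
    (∀ (n : ℕ) (f f' : APsub k G n), PhiAP (f + f') = PhiAP f + PhiAP f') ∧
    (∀ (n : ℕ) (c : k) (f : APsub k G n), PhiAP (c • f) = c • PhiAP f) := by
  refine ⟨fun n f => ?_, fun n α => ?_, fun n f f' => rfl, fun n c f => rfl⟩
  · apply Subtype.ext
    funext g
    obtain ⟨c, hc⟩ := f.2 g
    show PhiAP f ⟨Fin.cons (gprod g)⁻¹ g, iota_prod g⟩ • single (gprod g) (1:k) = f.1 g
    have : PhiAP f ⟨Fin.cons (gprod g)⁻¹ g, iota_prod g⟩ = c := by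
      simp [PhiAP, Fin.tail_cons, hc, MonoidAlgebra.single_apply]
    rw [this, hc]
  · funext g
    have hp : gprod (Fin.tail g.1) = (g.1 0)⁻¹ := by
      have h1 : gprod g.1 = 1 := g.2
      rw [← Fin.cons_self_tail g.1, gprod_cons] at h1
      exact eq_inv_of_mul_eq_one_right h1
    show ((PsiAP α).1 (Fin.tail g.1)).coeff ((g.1 0)⁻¹) = α g
    have hg : (⟨Fin.cons (gprod (Fin.tail g.1))⁻¹ (Fin.tail g.1), iota_prod _⟩ : NcyE G n) = g := by
      apply Subtype.ext
      show Fin.cons (gprod (Fin.tail g.1))⁻¹ (Fin.tail g.1) = g.1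
      rw [hp, inv_inv, Fin.cons_self_tail]
    simp [PsiAP, hg, hp, MonoidAlgebra.single_apply]
    rfl
end

section
/- Let G be a group and k a commutative ring. The non-autopoietic cochains NP(k[G]^{⊗*}) form a subcomplex of the Hochschild cochain complex (Hom_k(k[G]^{⊗*}, k[G]), δ): if f is non-autopoietic in degree n, then δf is non-autopoietic in degree n+1. -/
open MonoidAlgebra

variable {k G : Type} [CommRing k] [Group G]

/-- A cochain is (strictly) autopoietic if `f(g_1 ⊗ ⋯ ⊗ g_n) = λ_{g_1,…,g_n}·(g_1 g_2 ⋯ g_n)`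
(in degree `0`, `f(1) = λ·e`). -/
def IsAP {n : ℕ} (f : GCochain k G n) : Prop :=
  ∀ g : Fin n → G, ∃ c : k, f g = c • single (gprod g) (1 : k)

/-- A cochain is non-autopoietic if the coefficient of `g_1 g_2 ⋯ g_n` in
`f(g_1 ⊗ ⋯ ⊗ g_n)` vanishes for every tuple (in degree `0`, the coefficient of `e`
in `f(1)` vanishes). -/
def IsNP {n : ℕ} (f : GCochain k G n) : Prop :=
  ∀ g : Fin n → G, (f g).coeff (gprod g) = 0

lemma gprod_succ {n : ℕ} (g : Fin (n + 1) → G) : gprod g = g 0 * gprod (Fin.tail g) := by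
  rw [gprod, List.ofFn_succ, List.prod_cons]; rfl

lemma gprod_tail {n : ℕ} (g : Fin (n + 1) → G) : gprod (Fin.tail g) = (g 0)⁻¹ * gprod g := by
  rw [gprod_succ g]; group

lemma gprod_init {n : ℕ} (g : Fin (n + 1) → G) :
    gprod (Fin.init g) = gprod g * (g (Fin.last n))⁻¹ := by
  have : gprod g = gprod (Fin.init g) * g (Fin.last n) := by
    rw [gprod, List.ofFn_succ', List.concat_eq_append, List.prod_append, List.prod_cons,
      List.prod_nil, mul_one]; rfl
  rw [this]; group

lemma gmerge_succ {n : ℕ} (g : Fin (n + 2) → G) (j : Fin n) :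
    gmerge g j.succ = Fin.cons (g 0) (gmerge (Fin.tail g) j) := by
  funext x
  refine Fin.cases ?_ (fun x => ?_) x
  · simp [gmerge]
  · have hc : x.succ.castSucc = x.castSucc.succ := rfl
    simp only [gmerge, Fin.cons_succ, Fin.tail, Fin.val_succ, add_lt_add_iff_right,
      add_left_inj]
    split_ifs <;> first | omega | rw [hc] | rfl

lemma gprod_gmerge {n : ℕ} (g : Fin (n + 1) → G) (i : Fin n) :
    gprod (gmerge g i) = gprod g := by
  induction n with
  | zero => exact i.elim0
  | succ n ih =>
    refine Fin.cases ?_ (fun j => ?_) i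
    · have h0 : gmerge g 0 = Fin.cons (g 0 * g 1) (fun j : Fin n => g j.succ.succ) := by
        funext x
        refine Fin.cases ?_ (fun x => ?_) x
        · simp [gmerge]
        · simp only [gmerge, Fin.cons_succ, Fin.val_succ, Fin.val_zero]
          simp
      rw [h0, gprod_succ, gprod_succ g, gprod_succ (Fin.tail g)]
      simp only [Fin.cons_zero, Fin.tail, mul_assoc]
      congr 1
    · rw [gmerge_succ, gprod_succ, gprod_succ g]
      simp only [Fin.cons_zero, Fin.cons_succ] at *
      congr 1
      · simpa using ih (Fin.tail g) j

/-- The non-autopoietic cochains `NP(k[G]^{⊗*})` form a subcomplex of the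
Hochschild cochain complex: if `f` is non-autopoietic then so is `δf`. -/
theorem stmt_5 :
    ∀ (n : ℕ) (f : GCochain k G n), IsNP f → IsNP (gdelta k G n f) := by
  intro n f hf g
  have hm : ∀ i : Fin n, (f (gmerge g i)).coeff (gprod g) = 0 := fun i => by
    rw [← gprod_gmerge g i]; exact hf _
  have h1 : (f (Fin.tail g)).coeff ((g 0)⁻¹ * gprod g) = 0 := by
    rw [← gprod_tail]; exact hf _
  have h2 : (f (Fin.init g)).coeff (gprod g * (g (Fin.last n))⁻¹) = 0 := by
    rw [← gprod_init]; exact hf _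
  simp only [IsNP, gdelta, LinearMap.add_apply, LinearMap.smul_apply, LinearMap.sum_apply,
    LinearMap.pi_apply, LinearMap.comp_apply, LinearMap.proj_apply, LinearMap.mulLeft_apply,
    LinearMap.mulRight_apply, Pi.add_apply, Pi.smul_apply, Finset.sum_apply,
    Finsupp.add_apply, Finsupp.smul_apply, Finsupp.finset_sum_apply,
    coeff_single_mul_apply, coeff_mul_single_apply, one_mul, mul_one]
  simp only [coeff_add, coeff_smul, coeff_sum, Finsupp.add_apply, Finsupp.smul_apply,
    Finsupp.finset_sum_apply]
  simp only [coeff_single_mul_apply, coeff_mul_single_apply, one_mul, mul_one, h1, h2, Finsupp.smul_apply,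
    smul_zero, add_zero, zero_add, smul_eq_mul, mul_zero]
  refine Finset.sum_eq_zero fun i _ => ?_
  simp [hm]
end

section
/- Let C be an amalgam of groups G_1,...,G_N over a finite poset P without cycles, and k[C] its category algebra over a commutative ring k. Then restriction induces a k-module isomorphism AP(k[C]^{⊗n}, k[C]) ≅ AP(k[C]^{⊗_E n}, k[C]) between autopoietic Hochschild cochains defined on the full tensor power over k and those defined on the tensor power over the separable subalgebra E of object idempotents. -/
open scoped Classical

variable {k : Type} [CommRing k] {P : Type} [PartialOrder P] [Fintype P]
variable {Gr : P → Type} [∀ i, Group (Gr i)]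

/-- The morphisms of the amalgam category `C`: endomorphisms `Mor(i,i) = G_i`, and a
unique morphism `e_{ij}` for each pair `i ≺ j`. -/
abbrev Mor (P : Type) [PartialOrder P] (Gr : P → Type) : Type :=
  (Σ i : P, Gr i) ⊕ {p : P × P // p.1 < p.2}

/-- The source (domain) of a morphism. -/
def msrc : Mor P Gr → P
  | .inl ⟨i, _⟩ => i
  | .inr p => p.1.1

/-- The target (codomain) of a morphism. -/
def mtgt : Mor P Gr → P
  | .inl ⟨i, _⟩ => i
  | .inr p => p.1.2

/-- The identity morphism at the object `i`. -/
def midm (i : P) : Mor P Gr := .inl ⟨i, 1⟩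

/-- Composition of morphisms (left to right), returning the first argument as a junk
value on non-composable pairs. -/
noncomputable def mcomp : Mor P Gr → Mor P Gr → Mor P Gr
  | .inl ⟨i, g⟩, .inl ⟨j, h⟩ =>
      if hij : i = j then .inl ⟨j, (cast (congrArg Gr hij) g) * h⟩ else .inl ⟨i, g⟩
  | .inl _, .inr p => .inr p
  | .inr p, .inl _ => .inr p
  | .inr p, .inr q =>
      if hpq : p.1.2 = q.1.1 then
        .inr ⟨(p.1.1, q.1.2), lt_trans p.2 (by rw [hpq]; exact q.2)⟩
      else .inr p

/-- The structure constants of the category algebra: `1` on composable pairs, `0`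
otherwise. -/
noncomputable def mmu (k : Type) [CommRing k] (a b : Mor P Gr) : k :=
  if mtgt a = msrc b then 1 else 0

/-- Composable tuples of morphisms of `C` (chains in the nerve). -/
def CompT (P : Type) [PartialOrder P] (Gr : P → Type) (n : ℕ) : Type :=
  {φ : Fin n → Mor P Gr //
    ∀ (i : ℕ) (h : i + 1 < n), mtgt (φ ⟨i, by omega⟩) = msrc (φ ⟨i + 1, h⟩)}

variable {A : Type} [Ring A] [Algebra k A]

/-- The ordered product of a tuple of basis elements in the category algebra. -/
noncomputable def mprod (bas : Module.Basis (Mor P Gr) k A) {n : ℕ} (φ : Fin n → Mor P Gr) : A :=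
  (List.ofFn fun i => bas (φ i)).prod

/-- The submodule of autopoietic Hochschild cochains `AP(k[C]^{⊗n}, k[C])`, defined on the
full tensor power over `k`. -/
noncomputable def APfull (bas : Module.Basis (Mor P Gr) k A) (n : ℕ) :
    Submodule k ((Fin n → Mor P Gr) → A) where
  carrier := {f | ∀ φ, ∃ c : k, f φ = c • mprod bas φ}
  add_mem' := by
    intro f f' hf hf' φ
    obtain ⟨c, hc⟩ := hf φ
    obtain ⟨c', hc'⟩ := hf' φ
    exact ⟨c + c', by simp [hc, hc', add_smul]⟩
  zero_mem' := fun φ => ⟨0, by simp⟩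
  smul_mem' := by
    intro c f hf φ
    obtain ⟨c', hc'⟩ := hf φ
    exact ⟨c * c', by simp [hc', mul_smul]⟩

/-- The submodule of autopoietic cochains `AP(k[C]^{⊗_E n}, k[C])`, defined on the tensor
power over the separable subalgebra `E` — i.e. on composable tuples only. -/
noncomputable def APrel (bas : Module.Basis (Mor P Gr) k A) (n : ℕ) :
    Submodule k (CompT P Gr n → A) where
  carrier := {f | ∀ φ : CompT P Gr n, ∃ c : k, f φ = c • mprod bas φ.1}
  add_mem' := by
    intro f f' hf hf' φ
    obtain ⟨c, hc⟩ := hf φ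
    obtain ⟨c', hc'⟩ := hf' φ
    exact ⟨c + c', by simp [hc, hc', add_smul]⟩
  zero_mem' := fun φ => ⟨0, by simp⟩
  smul_mem' := by
    intro c f hf φ
    obtain ⟨c', hc'⟩ := hf φ
    exact ⟨c * c', by simp [hc', mul_smul]⟩

/-- Restriction of cochains from all tuples to composable tuples. -/
noncomputable def restrictAP (bas : Module.Basis (Mor P Gr) k A) (n : ℕ) :
    APfull bas n →ₗ[k] APrel bas n where
  toFun f := ⟨fun φ => f.1 φ.1, fun φ => f.2 φ.1⟩
  map_add' := by intro f g; rfl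
  map_smul' := by intro c f; rfl

lemma mprod_eq_zero_aux (bas : Module.Basis (Mor P Gr) k A) :
    ∀ (i : ℕ) {n : ℕ} (φ : Fin n → Mor P Gr) (h : i + 1 < n),
      bas (φ ⟨i, by omega⟩) * bas (φ ⟨i + 1, h⟩) = 0 → mprod bas φ = 0 := by
  intro i
  induction i with
  | zero =>
    intro n φ h h0
    obtain ⟨m, rfl⟩ : ∃ m, n = m + 2 := ⟨n - 2, by omega⟩
    simp only [mprod, List.ofFn_succ, List.prod_cons, ← mul_assoc]
    rw [show (0 : Fin (m + 2)) = ⟨0, by omega⟩ from rfl,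
      show (Fin.succ 0 : Fin (m + 2)) = ⟨0 + 1, h⟩ from rfl, h0, zero_mul]
  | succ i ih =>
    intro n φ h h0
    obtain ⟨m, rfl⟩ : ∃ m, n = m + 1 := ⟨n - 1, by omega⟩
    have : mprod bas φ = bas (φ 0) * mprod bas (fun j : Fin m => φ j.succ) := by
      simp [mprod, List.ofFn_succ]
    rw [this, ih (fun j : Fin m => φ j.succ) (by omega) h0, mul_zero]

lemma mprod_eq_zero (bas : Module.Basis (Mor P Gr) k A)
    (hmul : ∀ a b : Mor P Gr, bas a * bas b = mmu k a b • bas (mcomp a b))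
    {n : ℕ} (φ : Fin n → Mor P Gr)
    (hnc : ¬ ∀ (i : ℕ) (h : i + 1 < n),
      mtgt (φ ⟨i, by omega⟩) = msrc (φ ⟨i + 1, h⟩)) : mprod bas φ = 0 := by
  push_neg at hnc
  obtain ⟨i, h, hne⟩ := hnc
  refine mprod_eq_zero_aux bas i φ h ?_
  rw [hmul, mmu, if_neg hne, zero_smul]

/-- For the category algebra `k[C]` of an amalgam of groups over a finite
poset without cycles, restriction induces a `k`-module isomorphism
`AP(k[C]^{⊗n}, k[C]) ≅ AP(k[C]^{⊗_E n}, k[C])` between the autopoietic Hochschild cochains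
on the full tensor powers over `k` and those on the tensor powers over the separable
subalgebra `E` of object idempotents. -/
theorem stmt_16 (bas : Module.Basis (Mor P Gr) k A)
    (hmul : ∀ a b : Mor P Gr, bas a * bas b = mmu k a b • bas (mcomp a b))
    (hone : (1 : A) = ∑ i : P, bas (midm i)) :
    ∀ n : ℕ, Function.Bijective (restrictAP (k := k) bas n) := by
  intro n
  constructor
  · intro f g hfg
    ext φ
    by_cases hc : ∀ (i : ℕ) (h : i + 1 < n),
        mtgt (φ ⟨i, by omega⟩) = msrc (φ ⟨i + 1, h⟩)
    · exact congrFun (congrArg (fun x => (x.1 : CompT P Gr n → A)) hfg) ⟨φ, hc⟩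
    · obtain ⟨c, hcf⟩ := f.2 φ
      obtain ⟨c', hcg⟩ := g.2 φ
      rw [hcf, hcg, mprod_eq_zero bas hmul φ hc, smul_zero, smul_zero]
  · intro g
    refine ⟨⟨fun φ => if h : ∀ (i : ℕ) (h : i + 1 < n),
        mtgt (φ ⟨i, by omega⟩) = msrc (φ ⟨i + 1, h⟩) then g.1 ⟨φ, h⟩ else 0, ?_⟩, ?_⟩
    · intro φ
      by_cases h : ∀ (i : ℕ) (h : i + 1 < n),
          mtgt (φ ⟨i, by omega⟩) = msrc (φ ⟨i + 1, h⟩)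
      · obtain ⟨c, hc⟩ := g.2 ⟨φ, h⟩
        exact ⟨c, by simpa [dif_pos h] using hc⟩
      · exact ⟨0, by simp [dif_neg h]⟩
    · ext φ
      exact dif_pos φ.2
end
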